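/- (Pizzetti's formula) Let m ≥ 1 and let R : ℝ^m → ℝ be a polynomial function. Then ∫_{S^{m−1}} R dσ = ∑_{k=0}^{∞} (2π^{m/2}/(4^{k} · k! · Γ(k + m/2))) · (Δ^{k} R)(0), where the sum is finite since Δ^{k} R = 0 once 2k exceeds the degree of R. In particular the integral of a homogeneous polynomial of odd degree over S^{m−1} vanishes, and for R homogeneous of even degree 2k the integral equals (2π^{m/2}/(4^{k} k! Γ(k + m/2))) · Δ^{k} R, a constant. -/

import Mathlib

set_option synthInstance.maxHeartbeats 1000000
set_option maxHeartbeats 1000000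

open MeasureTheory

noncomputable section

/-- The ordinary Laplacian `Δ = ∑_{i=1}^m ∂²/∂x_i²` on polynomials on `ℝ^m`. -/
def polyLap (m : ℕ) : Module.End ℝ (MvPolynomial (Fin m) ℝ) :=
  ∑ i : Fin m, (MvPolynomial.pderiv i).toLinearMap ∘ₗ (MvPolynomial.pderiv i).toLinearMap

/-- The integral of a polynomial over the unit sphere `S^{m-1}` with respect to the
Lebesgue surface measure (`volume.toSphere`, whose total mass is `2π^{m/2}/Γ(m/2)`). -/
def sphereInt (m : ℕ) (R : MvPolynomial (Fin m) ℝ) : ℝ :=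
  ∫ ξ : Metric.sphere (0 : EuclideanSpace ℝ (Fin m)) 1,
    MvPolynomial.eval (fun i => (ξ : EuclideanSpace ℝ (Fin m)) i) R
    ∂((volume : Measure (EuclideanSpace ℝ (Fin m))).toSphere)

end

noncomputable section PizzettiAux

open MvPolynomial Real Set Metric

/-! ### Combinatorial side -/

open Finsupp in
lemma polyLap_monomial (m : ℕ) (α : Fin m →₀ ℕ) (c : ℝ) :
    polyLap m (MvPolynomial.monomial α c) =
      ∑ i : Fin m, MvPolynomial.monomial (α - Finsupp.single i 2)
        (c * (α i) * ((α i - 1 : ℕ) : ℝ)) := by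
  unfold polyLap
  rw [LinearMap.sum_apply]
  refine Finset.sum_congr rfl fun i _ => ?_
  have h0 : ((MvPolynomial.pderiv i).toLinearMap ∘ₗ (MvPolynomial.pderiv i).toLinearMap)
      (MvPolynomial.monomial α c) = pderiv i (pderiv i (monomial α c)) := rfl
  rw [h0, pderiv_monomial, pderiv_monomial, tsub_tsub, ← Finsupp.single_add]
  have h1 : ((α - Finsupp.single i 1 : Fin m →₀ ℕ)) i = α i - 1 := by
    rw [Finsupp.tsub_apply, Finsupp.single_eq_same]
  rw [h1]

def Dfun (n : ℕ) : ℝ := (n.factorial : ℝ) / ((n/2).factorial : ℝ)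

def Dval (m k : ℕ) (α : Fin m →₀ ℕ) : ℝ :=
  if (∀ i, Even (α i)) ∧ (∑ i, α i) = 2*k then (k.factorial : ℝ) * ∏ i, Dfun (α i) else 0

lemma happ (m : ℕ) (α : Fin m →₀ ℕ) (i j : Fin m) :
    (α - Finsupp.single i 2 : Fin m →₀ ℕ) j = α j - (if i = j then 2 else 0) := by
  rw [Finsupp.tsub_apply, Finsupp.single_apply]

lemma hsplitn (m : ℕ) (g : Fin m → ℕ) (i : Fin m) :
    ∑ j, g j = g i + ∑ j ∈ Finset.univ.erase i, g j :=
  (Finset.add_sum_erase _ g (Finset.mem_univ i)).symm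

lemma hsplitp (m : ℕ) (g : Fin m → ℝ) (i : Fin m) :
    ∏ j, g j = g i * ∏ j ∈ Finset.univ.erase i, g j :=
  (Finset.mul_prod_erase _ g (Finset.mem_univ i)).symm

lemma Dval_step (m k : ℕ) (α : Fin m →₀ ℕ) :
    ∑ i : Fin m, ((α i : ℝ) * ((α i - 1 : ℕ) : ℝ)) * Dval m k (α - Finsupp.single i 2)
      = Dval m (k+1) α := by
  have hsub : ∀ i : Fin m, 2 ≤ α i →
      (∑ j, (α - Finsupp.single i 2 : Fin m →₀ ℕ) j) = (∑ j, α j) - 2 := by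
    intro i hi
    have herase : ∑ j ∈ Finset.univ.erase i, (α - Finsupp.single i 2 : Fin m →₀ ℕ) j
        = ∑ j ∈ Finset.univ.erase i, α j := by
      refine Finset.sum_congr rfl fun j hj => ?_
      rw [happ]
      simp [(Finset.ne_of_mem_erase hj).symm]
    rw [hsplitn m _ i, hsplitn m (fun j => α j) i, happ, if_pos rfl, herase]
    omega
  rcases Classical.em (∀ i, Even (α i)) with hpar | hpar
  · rcases Classical.em ((∑ i, α i) = 2*(k+1)) with hdeg | hdeg
    · -- main case
      have hsum2 : (∑ i : Fin m, α i / 2) = k + 1 := by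
        have h2 : 2 * ∑ i : Fin m, α i / 2 = ∑ i : Fin m, α i := by
          rw [Finset.mul_sum]
          refine Finset.sum_congr rfl fun i _ => ?_
          have := (hpar i).two_dvd
          omega
        omega
      have key : ∀ i : Fin m, ((α i : ℝ) * ((α i - 1 : ℕ) : ℝ)) * Dval m k (α - Finsupp.single i 2)
          = ((α i / 2 : ℕ) : ℝ) * ((k.factorial : ℝ) * ∏ j, Dfun (α j)) := by
        intro i
        rcases Nat.eq_zero_or_pos (α i) with h0 | h0
        · simp [h0]
        · have h2 : 2 ≤ α i := by have := (hpar i).two_dvd; omega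
          obtain ⟨c, hc⟩ : ∃ c, α i = 2*c + 2 := by
            have := (hpar i).two_dvd; exact ⟨α i / 2 - 1, by omega⟩
          have hcond : (∀ j, Even ((α - Finsupp.single i 2 : Fin m →₀ ℕ) j)) ∧
              (∑ j, (α - Finsupp.single i 2 : Fin m →₀ ℕ) j) = 2*k := by
            constructor
            · intro j
              rw [happ]
              by_cases hne : i = j
              · subst hne
                rw [if_pos rfl]
                have h3 := (hpar i).two_dvd
                rw [Nat.even_iff] at *
                omega
              · simpa [hne] using hpar j
            · rw [hsub i h2]; omega
          rw [Dval, if_pos hcond]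
          have hprodL : (∏ j, Dfun ((α - Finsupp.single i 2 : Fin m →₀ ℕ) j))
              = Dfun (α i - 2) * ∏ j ∈ Finset.univ.erase i, Dfun (α j) := by
            rw [hsplitp m _ i, happ, if_pos rfl]
            congr 1
            refine Finset.prod_congr rfl fun j hj => ?_
            rw [happ]
            simp [(Finset.ne_of_mem_erase hj).symm]
          have hprodR : (∏ j, Dfun (α j)) = Dfun (α i) * ∏ j ∈ Finset.univ.erase i, Dfun (α j) :=
            hsplitp m _ i
          rw [hprodL, hprodR]
          have e1 : α i - 1 = 2*c + 1 := by omega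
          have e2 : α i - 2 = 2*c := by omega
          have e3 : α i / 2 = c + 1 := by omega
          rw [e1, e2, e3, hc]
          unfold Dfun
          have d1 : (2*c)/2 = c := by omega
          have d2 : (2*c+2)/2 = c+1 := by omega
          rw [d1, d2]
          have f1 : ((2*c+2).factorial : ℝ) = (2*c+2) * ((2*c+1) * ((2*c).factorial : ℝ)) := by
            rw [show 2*c+2 = (2*c+1)+1 by omega, Nat.factorial_succ, Nat.factorial_succ]
            push_cast; ring
          have f2 : ((c+1).factorial : ℝ) = (c+1) * (c.factorial : ℝ) := by
            rw [Nat.factorial_succ]; push_cast; ring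
          rw [f1, f2]
          have g1 : ((2*c).factorial : ℝ) ≠ 0 := Nat.cast_ne_zero.mpr (Nat.factorial_ne_zero _)
          have g2 : (c.factorial : ℝ) ≠ 0 := Nat.cast_ne_zero.mpr (Nat.factorial_ne_zero _)
          have g3 : ((c : ℝ) + 1) ≠ 0 := by positivity
          field_simp
          push_cast; ring
      rw [Finset.sum_congr rfl (fun i _ => key i), ← Finset.sum_mul, Dval, if_pos ⟨hpar, hdeg⟩]
      have hs : (∑ i : Fin m, ((α i / 2 : ℕ) : ℝ)) = ((k:ℝ) + 1) := by
        rw [← Nat.cast_sum, hsum2]; push_cast; ring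
      rw [hs, Nat.factorial_succ]
      push_cast; ring
    · -- degree mismatch
      rw [Dval, if_neg (fun h => hdeg h.2)]
      apply Finset.sum_eq_zero; intro i _
      rcases Nat.lt_or_ge (α i) 2 with h | h
      · have : α i = 0 := by have := (hpar i).two_dvd; omega
        simp [this]
      · rw [Dval, if_neg, mul_zero]
        rintro ⟨-, hsum⟩
        rw [hsub i h] at hsum
        have hle : α i ≤ ∑ j, α j :=
          Finset.single_le_sum (fun _ _ => Nat.zero_le _) (Finset.mem_univ i)
        omega
  · -- parity fails
    push_neg at hpar
    obtain ⟨j0, hj0⟩ := hpar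
    rw [Dval, if_neg (fun h => hj0 (h.1 j0))]
    apply Finset.sum_eq_zero; intro i _
    rcases Nat.lt_or_ge (α i) 2 with h | h
    · have : α i = 0 ∨ α i = 1 := by omega
      rcases this with h' | h' <;> simp [h']
    · rw [Dval, if_neg, mul_zero]
      rintro ⟨hev, -⟩
      have := hev j0
      rw [happ] at this
      rcases eq_or_ne i j0 with rfl | hne
      · rw [if_pos rfl] at this
        rw [Nat.even_iff] at this hj0
        exact hj0 (by omega)
      · rw [if_neg hne] at this
        simp at this
        exact hj0 this

lemma eval0_monomial (m : ℕ) (α : Fin m →₀ ℕ) (c : ℝ) :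
    MvPolynomial.eval (fun _ => (0:ℝ)) (MvPolynomial.monomial α c) = if α = 0 then c else 0 := by
  rw [MvPolynomial.eval_monomial]
  rcases eq_or_ne α 0 with rfl | h
  · simp
  · rw [if_neg h]
    obtain ⟨i, hi⟩ : ∃ i, α i ≠ 0 := by
      by_contra hc
      push_neg at hc
      exact h (Finsupp.ext hc)
    have hz : α.prod (fun _ e => (0:ℝ)^e) = 0 := by
      apply Finset.prod_eq_zero (Finsupp.mem_support_iff.mpr hi)
      simp [zero_pow hi]
    rw [hz, mul_zero]

lemma eval0_lapPow_monomial (m : ℕ) (k : ℕ) (α : Fin m →₀ ℕ) (c : ℝ) :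
    MvPolynomial.eval (fun _ => (0:ℝ)) ((polyLap m ^ k) (MvPolynomial.monomial α c))
      = c * Dval m k α := by
  induction k generalizing α c with
  | zero =>
    rw [pow_zero, Module.End.one_apply, eval0_monomial]
    unfold Dval
    rcases eq_or_ne α 0 with rfl | h
    · rw [if_pos rfl, if_pos ⟨fun i => Even.zero, by simp⟩]
      simp [Dfun]
    · rw [if_neg h, if_neg, mul_zero]
      rintro ⟨-, hs⟩
      refine h (Finsupp.ext fun i => ?_)
      have := (Finset.sum_eq_zero_iff.mp (by omega : (∑ i, α i) = 0)) i (Finset.mem_univ i)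
      simpa using this
  | succ k ih =>
    rw [pow_succ, Module.End.mul_apply, polyLap_monomial, map_sum, map_sum]
    have step : ∀ i : Fin m,
        MvPolynomial.eval (fun _ => (0:ℝ))
          ((polyLap m ^ k) (MvPolynomial.monomial (α - Finsupp.single i 2)
            (c * (α i) * ((α i - 1 : ℕ) : ℝ))))
        = c * (((α i : ℝ) * ((α i - 1 : ℕ) : ℝ)) * Dval m k (α - Finsupp.single i 2)) := by
      intro i
      rw [ih]
      ring
    rw [Finset.sum_congr rfl (fun i _ => step i), ← Finset.mul_sum, Dval_step]

lemma eval0_lapPow (m k : ℕ) (R : MvPolynomial (Fin m) ℝ) :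
    MvPolynomial.eval (fun _ => (0:ℝ)) ((polyLap m ^ k) R)
      = ∑ α ∈ R.support, R.coeff α * Dval m k α := by
  conv_lhs => rw [← MvPolynomial.support_sum_monomial_coeff R]
  rw [map_sum, map_sum]
  exact Finset.sum_congr rfl fun α _ => eval0_lapPow_monomial m k α _

/-! ### One-dimensional integrals -/

lemma gamma_half (b : ℕ) :
    Real.Gamma ((b:ℝ) + 1/2) = Real.sqrt Real.pi * (2*b).factorial / (4^b * b.factorial) := by
  induction b with
  | zero => simpa using Real.Gamma_one_half_eq
  | succ b ih =>
    have harg : ((b+1 : ℕ):ℝ) + 1/2 = ((b:ℝ) + 1/2) + 1 := by push_cast; ring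
    rw [harg, Real.Gamma_add_one (by positivity), ih]
    have f1 : ((2*(b+1)).factorial : ℝ) = (2*b+2) * ((2*b+1) * ((2*b).factorial : ℝ)) := by
      rw [show 2*(b+1) = (2*b+1)+1 by ring, Nat.factorial_succ, Nat.factorial_succ]
      push_cast; ring
    have f2 : ((b+1).factorial : ℝ) = ((b:ℝ)+1) * (b.factorial : ℝ) := by
      rw [Nat.factorial_succ]; push_cast; ring
    rw [f1, f2]
    have g1 : ((2*b).factorial : ℝ) ≠ 0 := Nat.cast_ne_zero.mpr (Nat.factorial_ne_zero _)
    have g2 : (b.factorial : ℝ) ≠ 0 := Nat.cast_ne_zero.mpr (Nat.factorial_ne_zero _)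
    have g3 : ((b:ℝ)+1) ≠ 0 := by positivity
    have g4 : ((4:ℝ)^b) ≠ 0 := by positivity
    rw [pow_succ]
    field_simp
    ring

lemma intIoi (n : ℕ) :
    ∫ x in Set.Ioi (0:ℝ), x ^ n * Real.exp (-x^2) = (1/2) * Real.Gamma (((n:ℝ)+1)/2) := by
  have hq : (-1 : ℝ) < (n:ℝ) := by
    have := Nat.cast_nonneg (α := ℝ) n
    linarith
  have h := integral_rpow_mul_exp_neg_rpow (p := 2) (q := (n:ℝ)) (by norm_num) hq
  rw [← h]
  refine (setIntegral_congr_fun measurableSet_Ioi fun x hx => ?_)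
  have h1 : x ^ ((n:ℕ):ℝ) = x ^ n := Real.rpow_natCast x n
  have h2 : x ^ ((2:ℕ):ℝ) = x ^ (2:ℕ) := Real.rpow_natCast x 2
  rw [h1, show (2:ℝ) = ((2:ℕ):ℝ) by norm_num, h2]

lemma intR_even (b : ℕ) :
    ∫ x : ℝ, x ^ (2*b) * Real.exp (-x^2) = Real.Gamma ((b:ℝ) + 1/2) := by
  have hcong : (fun x : ℝ => x ^ (2*b) * Real.exp (-x^2))
      = fun x : ℝ => |x| ^ (2*b) * Real.exp (-|x|^2) := by
    funext x
    rw [(even_two_mul b).pow_abs, sq_abs]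
  have h2 : ∫ x : ℝ, |x| ^ (2*b) * Real.exp (-|x|^2)
      = 2 * ∫ x in Set.Ioi (0:ℝ), x ^ (2*b) * Real.exp (-x^2) :=
    integral_comp_abs (f := fun t => t ^ (2*b) * Real.exp (-t^2))
  rw [hcong, h2, intIoi]
  rw [show (((2*b : ℕ):ℝ)+1)/2 = (b:ℝ) + 1/2 by push_cast; ring]
  ring

lemma intR_odd (n : ℕ) (h : Odd n) :
    ∫ x : ℝ, x ^ n * Real.exp (-x^2) = 0 := by
  set f : ℝ → ℝ := fun x => x ^ n * Real.exp (-x^2) with hf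
  have key : ∫ x : ℝ, f (-x) = ∫ x : ℝ, f x :=
    (Measure.measurePreserving_neg (volume : Measure ℝ)).integral_comp
      (Homeomorph.neg ℝ).measurableEmbedding f
  have h1 : (fun x : ℝ => f (-x)) = fun x => -(f x) := by
    funext x
    simp only [hf]
    rw [h.neg_pow, neg_sq]
    ring
  rw [h1, integral_neg] at key
  linarith

/-! ### Polar decomposition of the Gaussian integral -/

lemma eval_monomial_prod (m : ℕ) (α : Fin m →₀ ℕ) (v : Fin m → ℝ) :
    MvPolynomial.eval v (MvPolynomial.monomial α (1:ℝ)) = ∏ i, v i ^ α i := by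
  rw [MvPolynomial.eval_monomial, one_mul, Finsupp.prod_fintype]
  intro i
  exact pow_zero _

lemma gauss_product (m : ℕ) (α : Fin m →₀ ℕ) :
    ∫ x : EuclideanSpace ℝ (Fin m), (∏ i, x i ^ α i) * Real.exp (-‖x‖^2)
      = ∏ i, ∫ t : ℝ, t ^ α i * Real.exp (-t^2) := by
  have hnorm : ∀ x : EuclideanSpace ℝ (Fin m), ‖x‖^2 = ∑ i, (x i)^2 := by
    intro x
    rw [EuclideanSpace.norm_eq, Real.sq_sqrt (by positivity)]
    refine Finset.sum_congr rfl fun i _ => ?_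
    rw [Real.norm_eq_abs, sq_abs]
  have hpt : (fun x : EuclideanSpace ℝ (Fin m) => (∏ i, x i ^ α i) * Real.exp (-‖x‖^2))
      = fun x => ∏ i, (x i ^ α i * Real.exp (-(x i)^2)) := by
    funext x
    rw [hnorm, Finset.prod_mul_distrib, ← Real.exp_sum]
    congr 2
    rw [← Finset.sum_neg_distrib]
  rw [hpt]
  have key := (EuclideanSpace.volume_preserving_symm_measurableEquiv_toLp (Fin m)).integral_comp
    (MeasurableEquiv.measurableEmbedding _)
    (fun y : Fin m → ℝ => ∏ i, (y i ^ α i * Real.exp (-(y i)^2)))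
  rw [← MeasureTheory.integral_fintype_prod_eq_prod
    (f := fun i t => t ^ α i * Real.exp (-t^2)), ← MeasureTheory.volume_pi, ← key]
  rfl

lemma gauss_polar (m : ℕ) (hm : 1 ≤ m) (α : Fin m →₀ ℕ) :
    ∫ x : EuclideanSpace ℝ (Fin m), (∏ i, x i ^ α i) * Real.exp (-‖x‖^2)
      = sphereInt m (MvPolynomial.monomial α 1) *
        ∫ r in Set.Ioi (0:ℝ), r ^ ((m-1) + ∑ i, α i) * Real.exp (-r^2) := by
  have hne : Nonempty (Fin m) := ⟨⟨0, hm⟩⟩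
  haveI : Nontrivial (EuclideanSpace ℝ (Fin m)) := by
    refine ⟨EuclideanSpace.single ⟨0, hm⟩ (1:ℝ), 0, fun hc => ?_⟩
    have := congrArg (fun v : EuclideanSpace ℝ (Fin m) => v ⟨0, hm⟩) hc
    simp [EuclideanSpace.single_apply] at this
  set μ := (volume : Measure (EuclideanSpace ℝ (Fin m))) with hμ
  set f : EuclideanSpace ℝ (Fin m) → ℝ :=
    fun x => (∏ i, x i ^ α i) * Real.exp (-‖x‖^2) with hf
  set g : Metric.sphere (0 : EuclideanSpace ℝ (Fin m)) 1 × Set.Ioi (0:ℝ) → ℝ :=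
    fun p => (∏ i, (p.1 : EuclideanSpace ℝ (Fin m)) i ^ α i) *
      ((p.2:ℝ) ^ (∑ i, α i) * Real.exp (-(p.2:ℝ)^2)) with hg
  have hdim : Module.finrank ℝ (EuclideanSpace ℝ (Fin m)) = m := finrank_euclideanSpace_fin
  have step1 : ∫ x, f x ∂μ
      = ∫ x : ({0}ᶜ : Set (EuclideanSpace ℝ (Fin m))), f x ∂(μ.comap (↑)) := by
    rw [integral_subtype_comap (measurableSet_singleton _).compl f,
      MeasureTheory.restrict_compl_singleton]
  have hgT : ∀ x : ({0}ᶜ : Set (EuclideanSpace ℝ (Fin m))),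
      g (homeomorphUnitSphereProd (EuclideanSpace ℝ (Fin m)) x) = f x.1 := by
    intro x
    have hx0 : (x : EuclideanSpace ℝ (Fin m)) ≠ 0 := x.2
    have hxn : ‖(x : EuclideanSpace ℝ (Fin m))‖ ≠ 0 := norm_ne_zero_iff.2 hx0
    simp only [hg, hf, homeomorphUnitSphereProd_apply_fst_coe,
      homeomorphUnitSphereProd_apply_snd_coe]
    have hsm : ∀ i : Fin m,
        (‖(x : EuclideanSpace ℝ (Fin m))‖⁻¹ • (x : EuclideanSpace ℝ (Fin m))) i
        = ‖(x : EuclideanSpace ℝ (Fin m))‖⁻¹ * (x : EuclideanSpace ℝ (Fin m)) i := fun i => rfl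
    simp only [hsm]
    simp only [mul_pow]
    rw [Finset.prod_mul_distrib, Finset.prod_pow_eq_pow_sum, inv_pow]
    have hps : ‖(x : EuclideanSpace ℝ (Fin m))‖ ^ (∑ i, α i) ≠ 0 := pow_ne_zero _ hxn
    field_simp
  have step2 : ∫ x : ({0}ᶜ : Set (EuclideanSpace ℝ (Fin m))), f x ∂(μ.comap (↑))
      = ∫ p, g p ∂(μ.toSphere.prod
          (Measure.volumeIoiPow (Module.finrank ℝ (EuclideanSpace ℝ (Fin m)) - 1))) := by
    rw [← μ.measurePreserving_homeomorphUnitSphereProd.integral_comp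
      (Homeomorph.measurableEmbedding _) g]
    exact integral_congr_ae (Filter.Eventually.of_forall fun x => (hgT x).symm)
  have step3 : ∫ p, g p ∂(μ.toSphere.prod (Measure.volumeIoiPow (m - 1)))
      = (∫ ξ : Metric.sphere (0 : EuclideanSpace ℝ (Fin m)) 1,
          ∏ i, (ξ : EuclideanSpace ℝ (Fin m)) i ^ α i ∂μ.toSphere) *
        ∫ r : Set.Ioi (0:ℝ), ((r:ℝ) ^ (∑ i, α i) * Real.exp (-(r:ℝ)^2))
          ∂(Measure.volumeIoiPow (m - 1)) := by
    rw [hg]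
    exact integral_prod_mul (μ := μ.toSphere) (ν := Measure.volumeIoiPow (m-1))
      (fun ξ : Metric.sphere (0 : EuclideanSpace ℝ (Fin m)) 1 =>
        ∏ i, (ξ : EuclideanSpace ℝ (Fin m)) i ^ α i)
      (fun r : Set.Ioi (0:ℝ) => (r:ℝ) ^ (∑ i, α i) * Real.exp (-(r:ℝ)^2))
  have step4 : (∫ ξ : Metric.sphere (0 : EuclideanSpace ℝ (Fin m)) 1,
      ∏ i, (ξ : EuclideanSpace ℝ (Fin m)) i ^ α i ∂μ.toSphere)
      = sphereInt m (MvPolynomial.monomial α 1) := by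
    unfold sphereInt
    exact integral_congr_ae (Filter.Eventually.of_forall fun ξ =>
      (eval_monomial_prod m α _).symm)
  have step5 : (∫ r : Set.Ioi (0:ℝ), ((r:ℝ) ^ (∑ i, α i) * Real.exp (-(r:ℝ)^2))
      ∂(Measure.volumeIoiPow (m - 1)))
      = ∫ r in Set.Ioi (0:ℝ), r ^ ((m-1) + ∑ i, α i) * Real.exp (-r^2) := by
    simp only [Measure.volumeIoiPow, ENNReal.ofReal]
    rw [integral_withDensity_eq_integral_smul
      ((measurable_subtype_coe.pow_const _).real_toNNReal),
      integral_subtype_comap measurableSet_Ioi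
        (fun a : ℝ => Real.toNNReal (a ^ (m-1)) • (a ^ (∑ i, α i) * Real.exp (-a^2)))]
    refine setIntegral_congr_fun measurableSet_Ioi fun x hx => ?_
    rw [NNReal.smul_def, Real.coe_toNNReal _ (pow_nonneg hx.out.le _), smul_eq_mul, pow_add]
    ring
  rw [show (∫ x : EuclideanSpace ℝ (Fin m), (∏ i, x i ^ α i) * Real.exp (-‖x‖^2)) = ∫ x, f x ∂μ
    from rfl, step1, step2, hdim, step3, step4, step5]

/-! ### The sphere integral of a monomial -/

def cK (m k : ℕ) : ℝ :=
  2 * Real.pi ^ ((m : ℝ) / 2) /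
    (4 ^ k * k.factorial * Real.Gamma ((k : ℝ) + (m : ℝ) / 2))

lemma sqrt_pi_pow (m : ℕ) : Real.sqrt Real.pi ^ m = Real.pi ^ ((m : ℝ) / 2) := by
  rw [Real.sqrt_eq_rpow, ← Real.rpow_natCast (Real.pi ^ ((1:ℝ)/2)) m,
    ← Real.rpow_mul Real.pi_pos.le]
  congr 1
  ring

lemma sphereInt_monomial (m : ℕ) (hm : 1 ≤ m) (α : Fin m →₀ ℕ) :
    sphereInt m (MvPolynomial.monomial α 1) = ∑' k, cK m k * Dval m k α := by
  set s := ∑ i, α i with hsdef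
  have harg : ((((m-1) + s : ℕ)):ℝ) + 1 = ((m + s : ℕ) : ℝ) := by
    have hn : (m-1) + s + 1 = m + s := by omega
    calc ((((m-1) + s : ℕ)):ℝ) + 1 = (((m-1) + s + 1 : ℕ) : ℝ) := by push_cast; ring
    _ = ((m + s : ℕ) : ℝ) := by rw [hn]
  have hΓpos : 0 < Real.Gamma (((m+s:ℕ):ℝ)/2) := by
    apply Real.Gamma_pos_of_pos
    have : (0:ℝ) < ((m+s:ℕ):ℝ) := by exact_mod_cast (by omega : 0 < m + s)
    linarith
  have hEq : (∏ i, ∫ t : ℝ, t ^ α i * Real.exp (-t^2))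
      = sphereInt m (MvPolynomial.monomial α 1) * ((1/2) * Real.Gamma (((m+s:ℕ):ℝ)/2)) := by
    rw [← gauss_product m α, gauss_polar m hm α, intIoi, harg]
  have hSI : sphereInt m (MvPolynomial.monomial α 1)
      = (∏ i, ∫ t : ℝ, t ^ α i * Real.exp (-t^2)) * 2 / Real.Gamma (((m+s:ℕ):ℝ)/2) := by
    field_simp at hEq ⊢
    linarith
  by_cases hpar : ∀ i, Even (α i)
  · set k0 := s / 2 with hk0
    have hs2 : s = 2 * k0 := by
      have h2 : 2 * ∑ i : Fin m, α i / 2 = ∑ i : Fin m, α i := by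
        rw [Finset.mul_sum]
        refine Finset.sum_congr rfl fun i _ => ?_
        have := (hpar i).two_dvd
        omega
      omega
    have hsum2 : (∑ i : Fin m, α i / 2) = k0 := by
      have h2 : 2 * ∑ i : Fin m, α i / 2 = ∑ i : Fin m, α i := by
        rw [Finset.mul_sum]
        refine Finset.sum_congr rfl fun i _ => ?_
        have := (hpar i).two_dvd
        omega
      omega
    have hJ : ∀ i : Fin m, (∫ t : ℝ, t ^ α i * Real.exp (-t^2))
        = Real.Gamma (((α i / 2 : ℕ):ℝ) + 1/2) := by
      intro i
      have h2 : 2 * (α i / 2) = α i := by have := (hpar i).two_dvd; omega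
      conv_lhs => rw [← h2]
      rw [intR_even]
    have htsum : (∑' k, cK m k * Dval m k α) = cK m k0 * Dval m k0 α := by
      refine tsum_eq_single k0 fun k hk => ?_
      rw [Dval, if_neg, mul_zero]
      rintro ⟨-, hsk⟩
      exact hk (by omega)
    have hprod : ∏ i, Real.Gamma (((α i / 2 : ℕ):ℝ) + 1/2)
        = Real.pi ^ ((m : ℝ) / 2) * ((∏ i, Dfun (α i)) / 4 ^ k0) := by
      have hper : ∀ i : Fin m, Real.Gamma (((α i / 2 : ℕ):ℝ) + 1/2)
          = Real.sqrt Real.pi * Dfun (α i) / 4 ^ (α i / 2) := by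
        intro i
        rw [gamma_half]
        have h2 : 2 * (α i / 2) = α i := by have := (hpar i).two_dvd; omega
        rw [h2]
        unfold Dfun
        have g2 : (((α i)/2).factorial : ℝ) ≠ 0 := Nat.cast_ne_zero.mpr (Nat.factorial_ne_zero _)
        have g4 : ((4:ℝ) ^ (α i / 2)) ≠ 0 := by positivity
        field_simp
      rw [Finset.prod_congr rfl (fun i _ => hper i)]
      rw [Finset.prod_div_distrib, Finset.prod_mul_distrib, Finset.prod_const,
        Finset.prod_pow_eq_pow_sum, hsum2, Finset.card_univ, Fintype.card_fin, sqrt_pi_pow]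
      ring
    rw [htsum, hSI, Finset.prod_congr rfl (fun i _ => hJ i), hprod]
    rw [Dval, if_pos ⟨hpar, by omega⟩]
    have hΓarg : (((m + s : ℕ)):ℝ)/2 = (k0:ℝ) + (m:ℝ)/2 := by
      rw [hs2]; push_cast; ring
    rw [hΓarg]
    unfold cK
    have hΓpos' : 0 < Real.Gamma ((k0:ℝ) + (m:ℝ)/2) := by
      rw [← hΓarg]; exact hΓpos
    have n1 : Real.Gamma ((k0:ℝ) + (m:ℝ)/2) ≠ 0 := hΓpos'.ne'
    have n2 : ((4:ℝ) ^ k0) ≠ 0 := by positivity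
    have n3 : ((k0.factorial : ℝ)) ≠ 0 := Nat.cast_ne_zero.mpr (Nat.factorial_ne_zero _)
    field_simp
  · push_neg at hpar
    obtain ⟨j, hj⟩ := hpar
    have hJ0 : (∫ t : ℝ, t ^ α j * Real.exp (-t^2)) = 0 :=
      intR_odd _ (Nat.odd_iff.mpr (by rw [Nat.even_iff] at hj; omega))
    have hzero : (∏ i, ∫ t : ℝ, t ^ α i * Real.exp (-t^2)) = 0 :=
      Finset.prod_eq_zero (Finset.mem_univ j) hJ0
    rw [hSI, hzero, zero_mul, zero_div]
    have : ∀ k, cK m k * Dval m k α = 0 := by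
      intro k
      rw [Dval, if_neg (fun h => hj (h.1 j)), mul_zero]
    rw [tsum_congr this, tsum_zero]

/-! ### Linearity assembly -/

lemma continuous_eval (m : ℕ) (R : MvPolynomial (Fin m) ℝ) :
    Continuous fun x : EuclideanSpace ℝ (Fin m) => MvPolynomial.eval (fun i => x i) R := by
  induction R using MvPolynomial.induction_on with
  | C a => simpa using continuous_const
  | add p q hp hq => simp only [map_add]; exact hp.add hq
  | mul_X p i hp =>
    simp only [map_mul, MvPolynomial.eval_X]
    exact hp.mul ((continuous_apply i).comp (PiLp.continuous_ofLp 2 _))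

lemma integrable_sphere (m : ℕ) (R : MvPolynomial (Fin m) ℝ) :
    Integrable
      (fun ξ : Metric.sphere (0 : EuclideanSpace ℝ (Fin m)) 1 =>
        MvPolynomial.eval (fun i => (ξ : EuclideanSpace ℝ (Fin m)) i) R)
      ((volume : Measure (EuclideanSpace ℝ (Fin m))).toSphere) := by
  have hc : Continuous
      (fun ξ : Metric.sphere (0 : EuclideanSpace ℝ (Fin m)) 1 =>
        MvPolynomial.eval (fun i => (ξ : EuclideanSpace ℝ (Fin m)) i) R) :=
    (continuous_eval m R).comp continuous_subtype_val
  exact integrableOn_univ.mp (hc.continuousOn.integrableOn_compact isCompact_univ)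

lemma sphereInt_eq_sum (m : ℕ) (R : MvPolynomial (Fin m) ℝ) :
    sphereInt m R = ∑ α ∈ R.support, R.coeff α * sphereInt m (MvPolynomial.monomial α 1) := by
  unfold sphereInt
  have hpt : ∀ ξ : Metric.sphere (0 : EuclideanSpace ℝ (Fin m)) 1,
      MvPolynomial.eval (fun i => (ξ : EuclideanSpace ℝ (Fin m)) i) R
      = ∑ α ∈ R.support, R.coeff α *
          MvPolynomial.eval (fun i => (ξ : EuclideanSpace ℝ (Fin m)) i)
            (MvPolynomial.monomial α 1) := by
    intro ξ
    conv_lhs => rw [← MvPolynomial.support_sum_monomial_coeff R]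
    rw [map_sum]
    refine Finset.sum_congr rfl fun α hα => ?_
    rw [MvPolynomial.eval_monomial, MvPolynomial.eval_monomial, one_mul]
  rw [integral_congr_ae (Filter.Eventually.of_forall hpt)]
  rw [integral_finset_sum _ (fun α _ => (integrable_sphere m (MvPolynomial.monomial α 1)).const_mul _)]
  exact Finset.sum_congr rfl fun α _ => integral_const_mul _ _

lemma summable_aux (m : ℕ) (α : Fin m →₀ ℕ) (a : ℝ) :
    Summable fun k => a * (cK m k * Dval m k α) := by
  apply summable_of_ne_finset_zero (s := {(∑ i, α i)/2})
  intro k hk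
  simp only [Finset.mem_singleton] at hk
  rw [Dval, if_neg, mul_zero, mul_zero]
  rintro ⟨-, hs⟩
  exact hk (by omega)

lemma pizzetti_part1 (m : ℕ) (hm : 1 ≤ m) (R : MvPolynomial (Fin m) ℝ) :
    sphereInt m R = ∑' k : ℕ, cK m k *
      MvPolynomial.eval (fun _ => (0 : ℝ)) ((polyLap m ^ k) R) := by
  have h1 : ∀ k : ℕ, cK m k * MvPolynomial.eval (fun _ => (0 : ℝ)) ((polyLap m ^ k) R)
      = ∑ α ∈ R.support, R.coeff α * (cK m k * Dval m k α) := by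
    intro k
    rw [eval0_lapPow, Finset.mul_sum]
    exact Finset.sum_congr rfl fun α _ => by ring
  rw [tsum_congr h1, Summable.tsum_finsetSum (fun α _ => summable_aux m α _)]
  rw [sphereInt_eq_sum m R]
  refine Finset.sum_congr rfl fun α _ => ?_
  rw [tsum_mul_left, ← sphereInt_monomial m hm α]

lemma eval0_homog (m k d : ℕ) (R : MvPolynomial (Fin m) ℝ) (hhom : R.IsHomogeneous d)
    (hne : d ≠ 2*k) :
    MvPolynomial.eval (fun _ => (0:ℝ)) ((polyLap m ^ k) R) = 0 := by
  rw [eval0_lapPow]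
  apply Finset.sum_eq_zero
  intro α hα
  have hco : R.coeff α ≠ 0 := MvPolynomial.mem_support_iff.mp hα
  have hdeg : α.degree = d := by
    by_contra hc
    exact hco (hhom.coeff_eq_zero hc)
  have hsum : (∑ i, α i) = d := by
    rw [← hdeg, Finsupp.degree]
    exact (Finset.sum_subset (Finset.subset_univ _)
      (fun i _ hi => Finsupp.notMem_support_iff.mp hi)).symm
  rw [Dval, if_neg, mul_zero]
  rintro ⟨-, h2⟩
  exact hne (by omega)

end PizzettiAux

/-- Pizzetti's formula: for `m ≥ 1` and a polynomial `R` on `ℝ^m`,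
`∫_{S^{m-1}} R dσ = ∑_{k} (2π^{m/2}/(4^k k! Γ(k+m/2)))·(Δ^k R)(0)`.
In particular the integral of a homogeneous polynomial of odd degree vanishes, and for
`R` homogeneous of even degree `2k` the integral is
`(2π^{m/2}/(4^k k! Γ(k+m/2)))·Δ^k R` (a constant). -/
theorem pizzetti_formula (m : ℕ) (hm : 1 ≤ m) :
    (∀ R : MvPolynomial (Fin m) ℝ,
      sphereInt m R = ∑' k : ℕ,
        2 * Real.pi ^ ((m : ℝ) / 2) /
            (4 ^ k * k.factorial * Real.Gamma ((k : ℝ) + (m : ℝ) / 2)) *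
          MvPolynomial.eval (fun _ => (0 : ℝ)) ((polyLap m ^ k) R)) ∧
    (∀ R : MvPolynomial (Fin m) ℝ, ∀ d : ℕ, Odd d → R.IsHomogeneous d →
      sphereInt m R = 0) ∧
    (∀ R : MvPolynomial (Fin m) ℝ, ∀ k : ℕ, R.IsHomogeneous (2 * k) →
      sphereInt m R =
        2 * Real.pi ^ ((m : ℝ) / 2) /
            (4 ^ k * k.factorial * Real.Gamma ((k : ℝ) + (m : ℝ) / 2)) *
          MvPolynomial.eval (fun _ => (0 : ℝ)) ((polyLap m ^ k) R)) := by
  refine ⟨fun R => pizzetti_part1 m hm R, ?_, ?_⟩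
  · intro R d hodd hhom
    rw [pizzetti_part1 m hm R]
    have h0 : ∀ k : ℕ, cK m k * MvPolynomial.eval (fun _ => (0 : ℝ)) ((polyLap m ^ k) R) = 0 := by
      intro k
      rw [eval0_homog m k d R hhom (by rcases hodd with ⟨t, ht⟩; omega), mul_zero]
    rw [tsum_congr h0, tsum_zero]
  · intro R k hhom
    rw [pizzetti_part1 m hm R]
    exact tsum_eq_single k fun k' hk' => by
      rw [eval0_homog m k' (2*k) R hhom (by omega), mul_zero]
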